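/- Let P and Ξ be invertible symmetric p×p real matrices, ψ ∈ (0,1), S = (0_{p×p} : I_p) the p×2p selection matrix, and define the 2p×2p matrices P(ψ) = T ⊗ P and Ξ(ψ) = T ⊗ Ξ where T = [1, 1−ψ; 1−ψ, 1−ψ]. Let F(ψ) = S·P(ψ)⁻¹·Ξ(ψ)·P(ψ)⁻¹·S'. Then F(ψ)⁻¹ = ψ(1−ψ)·P·Ξ⁻¹·P. -/
import Mathlib


open Matrix Kronecker

/-- The sandwich variance reduces to closed form: with P(ψ) = T ⊗ P, Ξ(ψ) = T ⊗ Ξ,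
T = [1, 1−ψ; 1−ψ, 1−ψ], and S the selection of the second block,
F(ψ) = S·P(ψ)⁻¹·Ξ(ψ)·P(ψ)⁻¹·S' satisfies F(ψ)⁻¹ = ψ(1−ψ)·P·Ξ⁻¹·P. -/
theorem sandwich_variance_closed_form {p : ℕ}
    (P Xi : Matrix (Fin p) (Fin p) ℝ)
    (hP : IsUnit P.det) (hXi : IsUnit Xi.det)
    (hPsymm : P.IsSymm) (hXisymm : Xi.IsSymm)
    {ψ : ℝ} (hψ : ψ ∈ Set.Ioo (0:ℝ) 1) :
    let T : Matrix (Fin 2) (Fin 2) ℝ := !![1, 1 - ψ; 1 - ψ, 1 - ψ]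
    let S : Matrix (Fin p) (Fin 2 × Fin p) ℝ :=
      Matrix.of fun i jk => if jk = ((1 : Fin 2), i) then 1 else 0
    let F : Matrix (Fin p) (Fin p) ℝ := S * (T ⊗ₖ P)⁻¹ * (T ⊗ₖ Xi) * (T ⊗ₖ P)⁻¹ * Sᵀ
    F⁻¹ = (ψ * (1 - ψ)) • (P * Xi⁻¹ * P) := by
  obtain ⟨hψ0, hψ1⟩ := hψ
  intro T S F
  have hψ0' : ψ ≠ 0 := ne_of_gt hψ0
  have h1ψ : (1 : ℝ) - ψ ≠ 0 := sub_ne_zero.mpr (ne_of_gt hψ1)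
  have hc : ψ * (1 - ψ) ≠ 0 := mul_ne_zero hψ0' h1ψ
  -- inverse of T
  have hTinv : T⁻¹ = (ψ * (1 - ψ))⁻¹ • !![1 - ψ, ψ - 1; ψ - 1, 1] := by
    apply Matrix.inv_eq_right_inv
    ext i j
    fin_cases i <;> fin_cases j <;>
      simp [T, Matrix.mul_apply, Fin.sum_univ_two]
    all_goals field_simp
    all_goals ring
  have hTT : T⁻¹ * T = 1 := by
    apply Matrix.nonsing_inv_mul
    have : T.det = ψ * (1 - ψ) := by
      simp [T, Matrix.det_fin_two_of]; ring
    rw [this]; exact hc.isUnit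
  -- selection lemma
  have hsel : ∀ M : Matrix (Fin 2 × Fin p) (Fin 2 × Fin p) ℝ,
      S * M * Sᵀ = Matrix.of fun i j => M (1, i) (1, j) := by
    intro M
    ext i j
    simp [Matrix.mul_apply, S, Matrix.transpose_apply, ite_mul, mul_ite]
  -- rewrite F
  have hF : F = (ψ * (1 - ψ))⁻¹ • (P⁻¹ * Xi * P⁻¹) := by
    have hmid : (T ⊗ₖ P)⁻¹ * (T ⊗ₖ Xi) * (T ⊗ₖ P)⁻¹
        = T⁻¹ ⊗ₖ (P⁻¹ * Xi * P⁻¹) := by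
      rw [Matrix.inv_kronecker, ← Matrix.mul_kronecker_mul,
        ← Matrix.mul_kronecker_mul, Matrix.mul_assoc, Matrix.mul_assoc]
      congr 1
      rw [← Matrix.mul_assoc, hTT, Matrix.one_mul]
    have : F = S * ((T ⊗ₖ P)⁻¹ * (T ⊗ₖ Xi) * (T ⊗ₖ P)⁻¹) * Sᵀ := by
      simp only [F, Matrix.mul_assoc]
    rw [this, hmid, hsel]
    ext i j
    simp [Matrix.kroneckerMap_apply, hTinv, Matrix.smul_apply]
  -- conclude
  apply Matrix.inv_eq_right_inv
  rw [hF, Matrix.smul_mul, Matrix.mul_smul, smul_smul, inv_mul_cancel₀ hc, one_smul]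
  calc P⁻¹ * Xi * P⁻¹ * (P * Xi⁻¹ * P)
      = P⁻¹ * (Xi * ((P⁻¹ * P) * Xi⁻¹) * P) := by
        simp only [Matrix.mul_assoc]
    _ = 1 := by
        rw [Matrix.nonsing_inv_mul P hP, Matrix.one_mul,
          Matrix.mul_nonsing_inv Xi hXi, Matrix.one_mul,
          Matrix.nonsing_inv_mul P hP]
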